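/- Relative Mayer–Vietoris: let (H, A) and (H', A') be hypergraph pairs such that for all σ ∈ H, σ' ∈ H', either σ ∩ σ' = ∅ or σ ∩ σ' ∈ H ∩ H', and for all τ ∈ A, τ' ∈ A', either τ ∩ τ' = ∅ or τ ∩ τ' ∈ A ∩ A'. Then there is a long exact sequence ⋯ → H_n(H ∩ H', A ∩ A') → H_n(H, A) ⊕ H_n(H', A') → H_n(H ∪ H', A ∪ A') → H_{n-1}(H ∩ H', A ∩ A') → ⋯ of relative embedded homology. -/
import Mathlib


/-- Oriented `n`-simplices on a vertex set `V`: finsets of cardinality `n+1`. -/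
abbrev Simp (V : Type) (n : ℕ) : Type := {σ : Finset V // σ.card = n + 1}

/-- The group of `n`-chains with coefficients in `G` on the full simplex on `V`. -/
abbrev Ch (V : Type) (G : Type) [AddCommGroup G] (n : ℕ) : Type := Simp V n →₀ G

/-- Boundary of a single `(n+1)`-simplex with coefficient `g`. -/
noncomputable def bdryFun (V : Type) [LinearOrder V] (G : Type) [AddCommGroup G]
    (n : ℕ) (σ : Simp V (n + 1)) (g : G) : Ch V G n :=
  ∑ v ∈ σ.1.attach, Finsupp.single
    ⟨σ.1.erase v.1, by rw [Finset.card_erase_of_mem v.2, σ.2]; omega⟩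
    (((-1 : ℤ) ^ ((σ.1.filter fun w => w < v.1).card)) • g)

/-- The simplicial boundary homomorphism `C_{n+1} → C_n`. -/
noncomputable def bdry (V : Type) [LinearOrder V] (G : Type) [AddCommGroup G]
    (n : ℕ) : Ch V G (n + 1) →+ Ch V G n :=
  Finsupp.liftAddHom fun σ =>
    { toFun := bdryFun V G n σ
      map_zero' := by simp [bdryFun]
      map_add' := fun a b => by
        simp [bdryFun, smul_add, Finsupp.single_add, Finset.sum_add_distrib] }

/-- The subgroup `G(K)_n ⊆ C_n` of chains supported on the `n`-hyperedges of `K`. -/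
def chainsOn (V : Type) [LinearOrder V] (G : Type) [AddCommGroup G]
    (K : Set (Finset V)) (n : ℕ) : AddSubgroup (Ch V G n) where
  carrier := {c | ∀ σ ∈ c.support, (σ : Simp V n).1 ∈ K}
  zero_mem' := by simp
  add_mem' := by
    intro a b ha hb σ hσ
    rcases Finset.mem_union.mp (Finsupp.support_add hσ) with h | h
    exacts [ha σ h, hb σ h]
  neg_mem' := by
    intro a ha σ hσ
    exact ha σ (by simpa using hσ)

section Generic

variable {C : ℕ → Type} [∀ n, AddCommGroup (C n)]

/-- The infimum chain complex of a graded subgroup `D` inside `(C, d)`. -/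
def InfC (d : ∀ n, C (n + 1) →+ C n) (D : ∀ n, AddSubgroup (C n)) :
    ∀ n, AddSubgroup (C n)
  | 0 => D 0
  | (n + 1) => D (n + 1) ⊓ (D n).comap (d n)

/-- The supremum chain complex of a graded subgroup `D` inside `(C, d)`. -/
def SupC (d : ∀ n, C (n + 1) →+ C n) (D : ∀ n, AddSubgroup (C n)) (n : ℕ) :
    AddSubgroup (C n) :=
  D n ⊔ (D (n + 1)).map (d n)

/-- Relative cycles of the pair of graded subgroups `(K, L)`. -/
def relZ (d : ∀ n, C (n + 1) →+ C n) (K L : ∀ n, AddSubgroup (C n)) :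
    ∀ n, AddSubgroup (C n)
  | 0 => K 0
  | (n + 1) => K (n + 1) ⊓ (L n).comap (d n)

/-- Relative boundaries of the pair of graded subgroups `(K, L)`. -/
def relB (d : ∀ n, C (n + 1) →+ C n) (K L : ∀ n, AddSubgroup (C n)) (n : ℕ) :
    AddSubgroup (C n) :=
  ((K (n + 1)).map (d n) ⊔ L n) ⊓ relZ d K L n

/-- Relative homology of the pair `(K, L)`, i.e. the homology of the quotient chain
complex `K/L`.  (Taking `L = ⊥` gives the absolute homology of `K`.) -/
abbrev relH (d : ∀ n, C (n + 1) →+ C n) (K L : ∀ n, AddSubgroup (C n)) (n : ℕ) : Type _ :=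
  relZ d K L n ⧸ (relB d K L n).addSubgroupOf (relZ d K L n)

theorem relZ_mono (d : ∀ n, C (n + 1) →+ C n) {K L K' L' : ∀ n, AddSubgroup (C n)}
    (hK : ∀ n, K n ≤ K' n) (hL : ∀ n, L n ≤ L' n) :
    ∀ n, relZ d K L n ≤ relZ d K' L' n
  | 0 => hK 0
  | (n + 1) => inf_le_inf (hK (n + 1)) (AddSubgroup.comap_mono (hL n))

theorem relB_mono (d : ∀ n, C (n + 1) →+ C n) {K L K' L' : ∀ n, AddSubgroup (C n)}
    (hK : ∀ n, K n ≤ K' n) (hL : ∀ n, L n ≤ L' n) (n : ℕ) :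
    relB d K L n ≤ relB d K' L' n :=
  inf_le_inf (sup_le_sup (AddSubgroup.map_mono (hK (n + 1))) (hL n))
    (relZ_mono d hK hL n)

/-- The map on relative homology induced by an inclusion of pairs. -/
noncomputable def inducedRelMap (d : ∀ n, C (n + 1) →+ C n)
    {K L K' L' : ∀ n, AddSubgroup (C n)}
    (hK : ∀ n, K n ≤ K' n) (hL : ∀ n, L n ≤ L' n) (n : ℕ) :
    relH d K L n →+ relH d K' L' n :=
  QuotientAddGroup.map _ _ (AddSubgroup.inclusion (relZ_mono d hK hL n)) (by
    intro x hx
    simp only [AddSubgroup.mem_comap, AddSubgroup.mem_addSubgroupOf,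
      AddSubgroup.coe_inclusion] at hx ⊢
    exact relB_mono d hK hL n hx)

theorem InfC_le_SupC (d : ∀ n, C (n + 1) →+ C n) (D : ∀ n, AddSubgroup (C n)) :
    ∀ n, InfC d D n ≤ SupC d D n := by
  intro n
  cases n with
  | zero => exact le_sup_left
  | succ n => exact le_trans inf_le_left le_sup_left

theorem InfC_mono (d : ∀ n, C (n + 1) →+ C n) {D D' : ∀ n, AddSubgroup (C n)}
    (h : ∀ n, D n ≤ D' n) : ∀ n, InfC d D n ≤ InfC d D' n
  | 0 => h 0
  | (n + 1) => inf_le_inf (h (n + 1)) (AddSubgroup.comap_mono (h n))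

end Generic

theorem chainsOn_mono (V : Type) [LinearOrder V] (G : Type) [AddCommGroup G]
    {K K' : Set (Finset V)} (h : K ⊆ K') (n : ℕ) :
    chainsOn V G K n ≤ chainsOn V G K' n := by
  intro c hc σ hσ
  exact h (hc σ hσ)

/-- The map on relative embedded homology induced by an inclusion of hypergraph pairs
`(K, L) ⊆ (K', L')`. -/
noncomputable def pairMap (V : Type) [LinearOrder V] (G : Type) [AddCommGroup G]
    {K L K' L' : Set (Finset V)} (hK : K ⊆ K') (hL : L ⊆ L') (n : ℕ) :
    relH (bdry V G) (InfC (bdry V G) fun m => chainsOn V G K m)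
        (InfC (bdry V G) fun m => chainsOn V G L m) n →+
      relH (bdry V G) (InfC (bdry V G) fun m => chainsOn V G K' m)
        (InfC (bdry V G) fun m => chainsOn V G L' m) n :=
  inducedRelMap (bdry V G) (InfC_mono (bdry V G) fun m => chainsOn_mono V G hK m)
    (InfC_mono (bdry V G) fun m => chainsOn_mono V G hL m) n

/-- The first Mayer–Vietoris map
`H_n(H ∩ H', A ∩ A') → H_n(H, A) ⊕ H_n(H', A')`, induced by the two inclusions. -/
noncomputable def mvFst (V : Type) [LinearOrder V] (G : Type) [AddCommGroup G]
    (H H' A A' : Set (Finset V)) (n : ℕ) :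
    relH (bdry V G) (InfC (bdry V G) fun m => chainsOn V G (H ∩ H') m)
        (InfC (bdry V G) fun m => chainsOn V G (A ∩ A') m) n →+
      (relH (bdry V G) (InfC (bdry V G) fun m => chainsOn V G H m)
          (InfC (bdry V G) fun m => chainsOn V G A m) n) ×
        (relH (bdry V G) (InfC (bdry V G) fun m => chainsOn V G H' m)
          (InfC (bdry V G) fun m => chainsOn V G A' m) n) :=
  (pairMap V G Set.inter_subset_left Set.inter_subset_left n).prod
    (pairMap V G Set.inter_subset_right Set.inter_subset_right n)

/-- The second Mayer–Vietoris map
`H_n(H, A) ⊕ H_n(H', A') → H_n(H ∪ H', A ∪ A')`, the difference of the two maps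
induced by the inclusions. -/
noncomputable def mvSnd (V : Type) [LinearOrder V] (G : Type) [AddCommGroup G]
    (H H' A A' : Set (Finset V)) (n : ℕ) :
    ((relH (bdry V G) (InfC (bdry V G) fun m => chainsOn V G H m)
          (InfC (bdry V G) fun m => chainsOn V G A m) n) ×
        (relH (bdry V G) (InfC (bdry V G) fun m => chainsOn V G H' m)
          (InfC (bdry V G) fun m => chainsOn V G A' m) n)) →+
      relH (bdry V G) (InfC (bdry V G) fun m => chainsOn V G (H ∪ H') m)
        (InfC (bdry V G) fun m => chainsOn V G (A ∪ A') m) n :=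
  (pairMap V G Set.subset_union_left Set.subset_union_left n).comp
      (AddMonoidHom.fst _ _) -
    (pairMap V G Set.subset_union_right Set.subset_union_right n).comp
      (AddMonoidHom.snd _ _)

namespace MVAux

section Abstract

variable {C : ℕ → Type} [∀ n, AddCommGroup (C n)]

/-- Uniformized differential `C n →+ C (n-1)` (zero map in degree `0`). -/
def DD (d : ∀ n, C (n + 1) →+ C n) : ∀ n, C n →+ C (n - 1)
  | 0 => 0
  | (n + 1) => d n

/-- Uniformized shifted subgroup (`⊤` in degree `0`). -/
def LP (L : ∀ n, AddSubgroup (C n)) : ∀ n, AddSubgroup (C (n - 1))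
  | 0 => ⊤
  | (n + 1) => L n

variable {d : ∀ n, C (n + 1) →+ C n}

theorem mem_relZ_iff {K L : ∀ n, AddSubgroup (C n)} {n : ℕ} {x : C n} :
    x ∈ relZ d K L n ↔ x ∈ K n ∧ DD d n x ∈ LP L n := by
  cases n with
  | zero => simp [relZ, DD, LP]
  | succ n => simp [relZ, DD, LP, AddSubgroup.mem_inf, AddSubgroup.mem_comap]

theorem mem_relB_iff {K L : ∀ n, AddSubgroup (C n)} {n : ℕ} {x : C n} :
    x ∈ relB d K L n ↔
      (∃ ξ ∈ K (n + 1), ∃ l ∈ L n, x = d n ξ + l) ∧ x ∈ relZ d K L n := by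
  rw [relB, AddSubgroup.mem_inf, AddSubgroup.mem_sup]
  constructor
  · rintro ⟨⟨y, hy, l, hl, rfl⟩, hz⟩
    rcases AddSubgroup.mem_map.mp hy with ⟨ξ, hξ, rfl⟩
    exact ⟨⟨ξ, hξ, l, hl, rfl⟩, hz⟩
  · rintro ⟨⟨ξ, hξ, l, hl, rfl⟩, hz⟩
    exact ⟨⟨d n ξ, AddSubgroup.mem_map_of_mem _ hξ, l, hl, rfl⟩, hz⟩

theorem DD_d (hdd : ∀ n (x : C (n + 2)), d n (d (n + 1) x) = 0)
    (n : ℕ) (x : C (n + 1)) : DD d n (d n x) = 0 := by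
  cases n with
  | zero => rfl
  | succ n => exact hdd n x

theorem DD_mem {L : ∀ n, AddSubgroup (C n)}
    (hdL : ∀ n (x : C (n + 1)), x ∈ L (n + 1) → d n x ∈ L n)
    {n : ℕ} {x : C n} (hx : x ∈ L n) : DD d n x ∈ LP L n := by
  cases n with
  | zero => trivial
  | succ n => exact hdL n x hx

theorem LP_inf {L L' LI : ∀ n, AddSubgroup (C n)} (hLI : ∀ n, LI n = L n ⊓ L' n)
    (n : ℕ) : LP LI n = LP L n ⊓ LP L' n := by
  cases n with
  | zero => simp [LP]
  | succ n => exact hLI n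

/-- Membership in relative homology classes: `mk` equal to zero iff in `relB`. -/
theorem mk_eq_zero_iff {K L : ∀ n, AddSubgroup (C n)} {n : ℕ} {x : C n}
    (hx : x ∈ relZ d K L n) :
    (QuotientAddGroup.mk ⟨x, hx⟩ : relH d K L n) = 0 ↔ x ∈ relB d K L n := by
  rw [QuotientAddGroup.eq_zero_iff, AddSubgroup.mem_addSubgroupOf]

theorem mk_eq_mk_iff {K L : ∀ n, AddSubgroup (C n)} {n : ℕ} {x y : C n}
    (hx : x ∈ relZ d K L n) (hy : y ∈ relZ d K L n) :
    (QuotientAddGroup.mk ⟨x, hx⟩ : relH d K L n) = QuotientAddGroup.mk ⟨y, hy⟩ ↔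
      x - y ∈ relB d K L n := by
  rw [← sub_eq_zero, ← QuotientAddGroup.mk_sub]
  exact mk_eq_zero_iff (sub_mem hx hy)

theorem inducedRelMap_mk {K L K' L' : ∀ n, AddSubgroup (C n)}
    (hK : ∀ n, K n ≤ K' n) (hL : ∀ n, L n ≤ L' n) (n : ℕ) {x : C n}
    (hx : x ∈ relZ d K L n) :
    inducedRelMap d hK hL n (QuotientAddGroup.mk ⟨x, hx⟩) =
      QuotientAddGroup.mk ⟨x, relZ_mono d hK hL n hx⟩ := rfl

end Abstract

end MVAux

namespace MVAux

section Chase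

variable {C : ℕ → Type} [∀ n, AddCommGroup (C n)] {d : ∀ n, C (n + 1) →+ C n}
variable {K K' L L' KI KU LI LU : ∀ n, AddSubgroup (C n)}

theorem DD_succ (n : ℕ) : DD d (n + 1) = d n := rfl
theorem LP_succ (L : ∀ n, AddSubgroup (C n)) (n : ℕ) : LP L (n + 1) = L n := rfl

/-- Bundled Mayer–Vietoris chain-level data. -/
structure MVData (d : ∀ n, C (n + 1) →+ C n)
    (K K' L L' KI KU LI LU : ∀ n, AddSubgroup (C n)) : Prop where
  hdd : ∀ n (x : C (n + 2)), d n (d (n + 1) x) = 0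
  hLK : ∀ n, L n ≤ K n
  hLK' : ∀ n, L' n ≤ K' n
  hdK : ∀ n (x : C (n + 1)), x ∈ K (n + 1) → d n x ∈ K n
  hdK' : ∀ n (x : C (n + 1)), x ∈ K' (n + 1) → d n x ∈ K' n
  hdL : ∀ n (x : C (n + 1)), x ∈ L (n + 1) → d n x ∈ L n
  hdL' : ∀ n (x : C (n + 1)), x ∈ L' (n + 1) → d n x ∈ L' n
  hKI : ∀ n, KI n = K n ⊓ K' n
  hKU : ∀ n, KU n = K n ⊔ K' n
  hLI : ∀ n, LI n = L n ⊓ L' n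
  hLU : ∀ n, LU n = L n ⊔ L' n

variable (h : MVData d K K' L L' KI KU LI LU)

include h

theorem w_mem {n : ℕ} {z x y : C (n + 1)} {u v : C n}
    (hx : x ∈ K (n + 1)) (hy : y ∈ K' (n + 1))
    (hu : u ∈ L n) (hv : v ∈ L' n)
    (hxy : x + y = z) (huv : u + v = d n z) :
    d n x - u ∈ relZ d KI LI n := by
  have hsum : d n x + d n y = u + v := by rw [huv, ← hxy, map_add]
  have h1 : d n x - u = v - d n y := by
    rw [sub_eq_sub_iff_add_eq_add, hsum, add_comm]
  rw [mem_relZ_iff]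
  constructor
  · rw [h.hKI]
    refine AddSubgroup.mem_inf.mpr ⟨sub_mem (h.hdK n x hx) (h.hLK n hu), ?_⟩
    rw [h1]
    exact sub_mem (h.hLK' n hv) (h.hdK' n y hy)
  · rw [LP_inf h.hLI]
    refine AddSubgroup.mem_inf.mpr ⟨?_, ?_⟩
    · have e : DD d n (d n x - u) = - DD d n u := by
        rw [map_sub, DD_d h.hdd]; abel
      rw [e]
      exact neg_mem (DD_mem h.hdL hu)
    · have e : DD d n (d n x - u) = DD d n v := by
        rw [h1, map_sub, DD_d h.hdd]; abel
      rw [e]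
      exact DD_mem h.hdL' hv

theorem w_indep {n : ℕ} {z x y x' y' : C (n + 1)} {u v u' v' : C n}
    (hx : x ∈ K (n + 1)) (hy : y ∈ K' (n + 1))
    (hu : u ∈ L n) (hv : v ∈ L' n)
    (hx' : x' ∈ K (n + 1)) (hy' : y' ∈ K' (n + 1))
    (hu' : u' ∈ L n) (hv' : v' ∈ L' n)
    (hxy : x + y = z) (huv : u + v = d n z)
    (hxy' : x' + y' = z) (huv' : u' + v' = d n z) :
    (d n x - u) - (d n x' - u') ∈ relB d KI LI n := by
  have hξ : x - x' ∈ KI (n + 1) := by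
    rw [h.hKI]
    refine AddSubgroup.mem_inf.mpr ⟨sub_mem hx hx', ?_⟩
    have e : x - x' = y' - y := by
      rw [sub_eq_sub_iff_add_eq_add, hxy, ← hxy']; exact add_comm _ _
    rw [e]; exact sub_mem hy' hy
  have hlam : u' - u ∈ LI n := by
    rw [h.hLI]
    refine AddSubgroup.mem_inf.mpr ⟨sub_mem hu' hu, ?_⟩
    have e : u' - u = v - v' := by
      rw [sub_eq_sub_iff_add_eq_add, huv', ← huv]; exact add_comm _ _
    rw [e]; exact sub_mem hv hv'
  rw [mem_relB_iff]
  constructor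
  · exact ⟨x - x', hξ, u' - u, hlam, by rw [map_sub]; abel⟩
  · exact sub_mem (w_mem h hx hy hu hv hxy huv) (w_mem h hx' hy' hu' hv' hxy' huv')

theorem exists_decomp {n : ℕ} {z : C (n + 1)}
    (hz : z ∈ relZ d KU LU (n + 1)) :
    ∃ x y u v, x ∈ K (n + 1) ∧ y ∈ K' (n + 1) ∧ u ∈ L n ∧ v ∈ L' n ∧
      x + y = z ∧ u + v = d n z := by
  obtain ⟨hz1, hz2⟩ := mem_relZ_iff.mp hz
  rw [h.hKU] at hz1
  have hz2' : d n z ∈ L n ⊔ L' n := by rw [← h.hLU]; exact hz2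
  obtain ⟨x, hx, y, hy, hxy⟩ := AddSubgroup.mem_sup.mp hz1
  obtain ⟨u, hu, v, hv, huv⟩ := AddSubgroup.mem_sup.mp hz2'
  exact ⟨x, y, u, v, hx, hy, hu, hv, hxy, huv⟩

theorem connAux_exists (n : ℕ) (z : relZ d KU LU (n + 1)) :
    ∃ w : relH d KI LI n, ∀ (x y : C (n + 1)) (u v : C n),
      x ∈ K (n + 1) → y ∈ K' (n + 1) → u ∈ L n → v ∈ L' n →
      x + y = (z : C (n + 1)) → u + v = d n (z : C (n + 1)) →
      ∀ (hmem : d n x - u ∈ relZ d KI LI n),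
        w = QuotientAddGroup.mk ⟨d n x - u, hmem⟩ := by
  obtain ⟨x, y, u, v, hx, hy, hu, hv, hxy, huv⟩ := exists_decomp h z.2
  refine ⟨QuotientAddGroup.mk ⟨d n x - u, w_mem h hx hy hu hv hxy huv⟩, ?_⟩
  intro x' y' u' v' hx' hy' hu' hv' hxy' huv' hmem
  rw [mk_eq_mk_iff]
  exact w_indep h hx hy hu hv hx' hy' hu' hv' hxy huv hxy' huv'

/-- The connecting function on relative cycles. -/
noncomputable def connAux (n : ℕ) (z : relZ d KU LU (n + 1)) : relH d KI LI n :=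
  (connAux_exists h n z).choose

theorem connAux_spec (n : ℕ) (z : relZ d KU LU (n + 1)) {x y : C (n + 1)} {u v : C n}
    (hx : x ∈ K (n + 1)) (hy : y ∈ K' (n + 1)) (hu : u ∈ L n) (hv : v ∈ L' n)
    (hxy : x + y = (z : C (n + 1))) (huv : u + v = d n (z : C (n + 1))) :
    connAux h n z =
      QuotientAddGroup.mk ⟨d n x - u, w_mem h hx hy hu hv hxy huv⟩ :=
  (connAux_exists h n z).choose_spec x y u v hx hy hu hv hxy huv _

theorem connAux_add (n : ℕ) (z z' : relZ d KU LU (n + 1)) :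
    connAux h n (z + z') = connAux h n z + connAux h n z' := by
  obtain ⟨x, y, u, v, hx, hy, hu, hv, hxy, huv⟩ := exists_decomp h z.2
  obtain ⟨x', y', u', v', hx', hy', hu', hv', hxy', huv'⟩ := exists_decomp h z'.2
  have hxy2 : (x + x') + (y + y') = ((z + z' : relZ d KU LU (n + 1)) : C (n + 1)) := by
    push_cast
    rw [← hxy, ← hxy']; abel
  have huv2 : (u + u') + (v + v') = d n ((z + z' : relZ d KU LU (n + 1)) : C (n + 1)) := by
    push_cast
    rw [map_add, ← huv, ← huv']; abel
  rw [connAux_spec h n z hx hy hu hv hxy huv,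
    connAux_spec h n z' hx' hy' hu' hv' hxy' huv',
    connAux_spec h n (z + z') (add_mem hx hx') (add_mem hy hy') (add_mem hu hu')
      (add_mem hv hv') hxy2 huv2]
  rw [← QuotientAddGroup.mk_add]
  congr 1
  apply Subtype.ext
  show d n (x + x') - (u + u') = (d n x - u) + (d n x' - u')
  rw [map_add]; abel

/-- The connecting homomorphism. -/
noncomputable def conn (n : ℕ) :
    relH d KU LU (n + 1) →+ relH d KI LI n :=
  QuotientAddGroup.lift _ (AddMonoidHom.mk' (connAux h n) (connAux_add h n)) (by
    intro b hb
    have hb' : (b : C (n + 1)) ∈ relB d KU LU (n + 1) :=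
      (AddSubgroup.mem_addSubgroupOf).mp hb
    obtain ⟨⟨ζ, hζ, l, hl, hbe⟩, -⟩ := mem_relB_iff.mp hb'
    rw [h.hKU] at hζ
    rw [h.hLU] at hl
    obtain ⟨ζ₁, hζ₁, ζ₂, hζ₂, hζe⟩ := AddSubgroup.mem_sup.mp hζ
    obtain ⟨l₁, hl₁, l₂, hl₂, hle⟩ := AddSubgroup.mem_sup.mp hl
    have hx : d (n + 1) ζ₁ + l₁ ∈ K (n + 1) :=
      add_mem (h.hdK (n + 1) ζ₁ hζ₁) (h.hLK (n + 1) hl₁)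
    have hy : d (n + 1) ζ₂ + l₂ ∈ K' (n + 1) :=
      add_mem (h.hdK' (n + 1) ζ₂ hζ₂) (h.hLK' (n + 1) hl₂)
    have hu : d n l₁ ∈ L n := h.hdL n l₁ hl₁
    have hv : d n l₂ ∈ L' n := h.hdL' n l₂ hl₂
    have hxy : (d (n + 1) ζ₁ + l₁) + (d (n + 1) ζ₂ + l₂) = (b : C (n + 1)) := by
      rw [hbe, ← hζe, ← hle, map_add]; abel
    have huv : d n l₁ + d n l₂ = d n (b : C (n + 1)) := by
      rw [hbe, map_add, h.hdd n ζ, zero_add, ← hle, map_add]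
    show connAux h n b = 0
    rw [connAux_spec h n b hx hy hu hv hxy huv]
    have e0 : d n (d (n + 1) ζ₁ + l₁) - d n l₁ = 0 := by
      rw [map_add, h.hdd n ζ₁]; abel
    rw [mk_eq_zero_iff, e0]
    exact zero_mem _)

theorem conn_mk (n : ℕ) (z : relZ d KU LU (n + 1)) :
    conn h n (QuotientAddGroup.mk z) = connAux h n z := rfl

theorem exact_one
    (hKIK : ∀ n, KI n ≤ K n) (hKIK' : ∀ n, KI n ≤ K' n)
    (hLIL : ∀ n, LI n ≤ L n) (hLIL' : ∀ n, LI n ≤ L' n)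
    (hKKU : ∀ n, K n ≤ KU n) (hK'KU : ∀ n, K' n ≤ KU n)
    (hLLU : ∀ n, L n ≤ LU n) (hL'LU : ∀ n, L' n ≤ LU n) (n : ℕ) :
    Function.Exact
      ((inducedRelMap d hKIK hLIL n).prod (inducedRelMap d hKIK' hLIL' n))
      ((inducedRelMap d hKKU hLLU n).comp (AddMonoidHom.fst (relH d K L n) (relH d K' L' n)) -
        (inducedRelMap d hK'KU hL'LU n).comp (AddMonoidHom.snd (relH d K L n) (relH d K' L' n))) := by
  intro p
  obtain ⟨a, b⟩ := p
  induction a using QuotientAddGroup.induction_on with | H za => ?_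
  induction b using QuotientAddGroup.induction_on with | H zb => ?_
  obtain ⟨x, hx⟩ := za
  obtain ⟨y, hy⟩ := zb
  have hxU : x ∈ relZ d KU LU n := relZ_mono d hKKU hLLU n hx
  have hyU : y ∈ relZ d KU LU n := relZ_mono d hK'KU hL'LU n hy
  have jval : ((inducedRelMap d hKKU hLLU n).comp (AddMonoidHom.fst (relH d K L n) (relH d K' L' n)) -
      (inducedRelMap d hK'KU hL'LU n).comp (AddMonoidHom.snd (relH d K L n) (relH d K' L' n)))
      (QuotientAddGroup.mk ⟨x, hx⟩, QuotientAddGroup.mk ⟨y, hy⟩) =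
      QuotientAddGroup.mk ⟨x - y, sub_mem hxU hyU⟩ := by
    simp only [AddMonoidHom.sub_apply, AddMonoidHom.coe_comp, Function.comp_apply,
      AddMonoidHom.coe_fst, AddMonoidHom.coe_snd, inducedRelMap_mk,
      ← QuotientAddGroup.mk_sub]
    rfl
  rw [jval, mk_eq_zero_iff]
  constructor
  · intro hB
    obtain ⟨⟨ζ, hζ, l, hl, he⟩, -⟩ := mem_relB_iff.mp hB
    rw [h.hKU] at hζ
    rw [h.hLU] at hl
    obtain ⟨ζ₁, hζ₁, ζ₂, hζ₂, hζe⟩ := AddSubgroup.mem_sup.mp hζ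
    obtain ⟨l₁, hl₁, l₂, hl₂, hle⟩ := AddSubgroup.mem_sup.mp hl
    have he' : x - y = d n ζ₁ + d n ζ₂ + (l₁ + l₂) := by
      rw [← map_add, hζe, hle]; exact he
    have hw2 : x - d n ζ₁ - l₁ = y + d n ζ₂ + l₂ := by
      linear_combination (norm := abel1) he'
    have hwZ : x - d n ζ₁ - l₁ ∈ relZ d KI LI n := by
      rw [mem_relZ_iff]
      constructor
      · rw [h.hKI]
        refine AddSubgroup.mem_inf.mpr ⟨?_, ?_⟩
        · exact sub_mem (sub_mem (mem_relZ_iff.mp hx).1 (h.hdK n ζ₁ hζ₁)) (h.hLK n hl₁)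
        · rw [hw2]
          exact add_mem (add_mem (mem_relZ_iff.mp hy).1 (h.hdK' n ζ₂ hζ₂)) (h.hLK' n hl₂)
      · rw [LP_inf h.hLI]
        refine AddSubgroup.mem_inf.mpr ⟨?_, ?_⟩
        · have e : DD d n (x - d n ζ₁ - l₁) = DD d n x - DD d n l₁ := by
            rw [map_sub, map_sub, DD_d h.hdd]; abel
          rw [e]
          exact sub_mem (mem_relZ_iff.mp hx).2 (DD_mem h.hdL hl₁)
        · have e : DD d n (x - d n ζ₁ - l₁) = DD d n y + DD d n l₂ := by
            rw [hw2, map_add, map_add, DD_d h.hdd]; abel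
          rw [e]
          exact add_mem (mem_relZ_iff.mp hy).2 (DD_mem h.hdL' hl₂)
    refine ⟨QuotientAddGroup.mk ⟨x - d n ζ₁ - l₁, hwZ⟩, ?_⟩
    have ival : ((inducedRelMap d hKIK hLIL n).prod (inducedRelMap d hKIK' hLIL' n))
        (QuotientAddGroup.mk ⟨x - d n ζ₁ - l₁, hwZ⟩) =
        (QuotientAddGroup.mk ⟨x - d n ζ₁ - l₁, relZ_mono d hKIK hLIL n hwZ⟩,
         QuotientAddGroup.mk ⟨x - d n ζ₁ - l₁, relZ_mono d hKIK' hLIL' n hwZ⟩) := rfl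
    rw [ival, Prod.mk.injEq]
    constructor
    · rw [mk_eq_mk_iff, mem_relB_iff]
      refine ⟨⟨-ζ₁, neg_mem hζ₁, -l₁, neg_mem hl₁, by rw [map_neg]; abel⟩,
        sub_mem (relZ_mono d hKIK hLIL n hwZ) hx⟩
    · rw [mk_eq_mk_iff, mem_relB_iff]
      refine ⟨⟨ζ₂, hζ₂, l₂, hl₂, by rw [hw2]; abel⟩,
        sub_mem (relZ_mono d hKIK' hLIL' n hwZ) hy⟩
  · rintro ⟨c, hc⟩
    revert hc
    induction c using QuotientAddGroup.induction_on with | H zc => ?_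
    obtain ⟨w, hw⟩ := zc
    intro hc
    have h1 : (QuotientAddGroup.mk ⟨w, relZ_mono d hKIK hLIL n hw⟩ :
        relH d K L n) = QuotientAddGroup.mk ⟨x, hx⟩ := congrArg Prod.fst hc
    have h2 : (QuotientAddGroup.mk ⟨w, relZ_mono d hKIK' hLIL' n hw⟩ :
        relH d K' L' n) = QuotientAddGroup.mk ⟨y, hy⟩ := congrArg Prod.snd hc
    rw [mk_eq_mk_iff, mem_relB_iff] at h1 h2
    obtain ⟨⟨ζ₁, hζ₁, l₁, hl₁, he₁⟩, -⟩ := h1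
    obtain ⟨⟨ζ₂, hζ₂, l₂, hl₂, he₂⟩, -⟩ := h2
    rw [mem_relB_iff]
    refine ⟨⟨ζ₂ - ζ₁, sub_mem (hK'KU (n + 1) hζ₂) (hKKU (n + 1) hζ₁),
      l₂ - l₁, sub_mem (hL'LU n hl₂) (hLLU n hl₁), ?_⟩, sub_mem hxU hyU⟩
    have e : x - y = (w - y) - (w - x) := by abel
    rw [e, he₁, he₂, map_sub]
    abel

theorem surj_zero
    (hKKU : ∀ n, K n ≤ KU n) (hK'KU : ∀ n, K' n ≤ KU n)
    (hLLU : ∀ n, L n ≤ LU n) (hL'LU : ∀ n, L' n ≤ LU n) :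
    Function.Surjective
      ((inducedRelMap d hKKU hLLU 0).comp (AddMonoidHom.fst (relH d K L 0) (relH d K' L' 0)) -
        (inducedRelMap d hK'KU hL'LU 0).comp (AddMonoidHom.snd (relH d K L 0) (relH d K' L' 0))) := by
  intro c
  induction c using QuotientAddGroup.induction_on with | H zc => ?_
  obtain ⟨z, hz⟩ := zc
  have hz' : z ∈ K 0 ⊔ K' 0 := by
    rw [← h.hKU]; exact (mem_relZ_iff.mp hz).1
  obtain ⟨x, hx, y, hy, hxy⟩ := AddSubgroup.mem_sup.mp hz'
  have hxZ : x ∈ relZ d K L 0 := mem_relZ_iff.mpr ⟨hx, trivial⟩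
  have hyZ : -y ∈ relZ d K' L' 0 := mem_relZ_iff.mpr ⟨neg_mem hy, trivial⟩
  refine ⟨(QuotientAddGroup.mk ⟨x, hxZ⟩, QuotientAddGroup.mk ⟨-y, hyZ⟩), ?_⟩
  have jval : ((inducedRelMap d hKKU hLLU 0).comp (AddMonoidHom.fst (relH d K L 0) (relH d K' L' 0)) -
      (inducedRelMap d hK'KU hL'LU 0).comp (AddMonoidHom.snd (relH d K L 0) (relH d K' L' 0)))
      (QuotientAddGroup.mk ⟨x, hxZ⟩, QuotientAddGroup.mk ⟨-y, hyZ⟩) =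
      QuotientAddGroup.mk ⟨x - -y, sub_mem (relZ_mono d hKKU hLLU 0 hxZ)
        (relZ_mono d hK'KU hL'LU 0 hyZ)⟩ := by
    simp only [AddMonoidHom.sub_apply, AddMonoidHom.coe_comp, Function.comp_apply,
      AddMonoidHom.coe_fst, AddMonoidHom.coe_snd, inducedRelMap_mk,
      ← QuotientAddGroup.mk_sub]
    rfl
  rw [jval]
  exact congrArg QuotientAddGroup.mk
    (Subtype.ext (show x - -y = z by rw [sub_neg_eq_add]; exact hxy))

omit h in
theorem mem_relZ_succ' {K L : ∀ n, AddSubgroup (C n)} {n : ℕ} {x : C (n + 1)} :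
    x ∈ relZ d K L (n + 1) ↔ x ∈ K (n + 1) ∧ d n x ∈ L n := Iff.rfl

omit h in
theorem j_apply
    (hKKU : ∀ n, K n ≤ KU n) (hK'KU : ∀ n, K' n ≤ KU n)
    (hLLU : ∀ n, L n ≤ LU n) (hL'LU : ∀ n, L' n ≤ LU n) (n : ℕ) {x y : C n}
    (hx : x ∈ relZ d K L n) (hy : y ∈ relZ d K' L' n) :
    ((inducedRelMap d hKKU hLLU n).comp
        (AddMonoidHom.fst (relH d K L n) (relH d K' L' n)) -
      (inducedRelMap d hK'KU hL'LU n).comp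
        (AddMonoidHom.snd (relH d K L n) (relH d K' L' n)))
      (QuotientAddGroup.mk ⟨x, hx⟩, QuotientAddGroup.mk ⟨y, hy⟩) =
      QuotientAddGroup.mk ⟨x - y,
        sub_mem (relZ_mono d hKKU hLLU n hx) (relZ_mono d hK'KU hL'LU n hy)⟩ := by
  simp only [AddMonoidHom.sub_apply, AddMonoidHom.coe_comp, Function.comp_apply,
    AddMonoidHom.coe_fst, AddMonoidHom.coe_snd, inducedRelMap_mk,
    ← QuotientAddGroup.mk_sub]
  rfl

theorem exact_two
    (hKKU : ∀ n, K n ≤ KU n) (hK'KU : ∀ n, K' n ≤ KU n)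
    (hLLU : ∀ n, L n ≤ LU n) (hL'LU : ∀ n, L' n ≤ LU n) (n : ℕ) :
    Function.Exact
      ((inducedRelMap d hKKU hLLU (n + 1)).comp
          (AddMonoidHom.fst (relH d K L (n + 1)) (relH d K' L' (n + 1))) -
        (inducedRelMap d hK'KU hL'LU (n + 1)).comp
          (AddMonoidHom.snd (relH d K L (n + 1)) (relH d K' L' (n + 1))))
      (conn h n) := by
  intro c
  induction c using QuotientAddGroup.induction_on with | H zc => ?_
  obtain ⟨z, hz⟩ := zc
  constructor
  · intro h0
    obtain ⟨x, y, u, v, hx, hy, hu, hv, hxy, huv⟩ := exists_decomp h hz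
    rw [conn_mk, connAux_spec h n ⟨z, hz⟩ hx hy hu hv hxy huv, mk_eq_zero_iff] at h0
    obtain ⟨⟨ξ, hξ, lam, hlam, he⟩, -⟩ := mem_relB_iff.mp h0
    have hξ' : ξ ∈ K (n + 1) ⊓ K' (n + 1) := h.hKI (n + 1) ▸ hξ
    have hlam' : lam ∈ L n ⊓ L' n := h.hLI n ▸ hlam
    have hsum : d n x + d n y = u + v := by rw [huv, ← hxy, map_add]
    have hxt : x - ξ ∈ relZ d K L (n + 1) := by
      rw [mem_relZ_succ']
      refine ⟨sub_mem hx (AddSubgroup.mem_inf.mp hξ').1, ?_⟩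
      have e : d n (x - ξ) = u + lam := by
        rw [map_sub]
        linear_combination (norm := abel1) he
      rw [e]
      exact add_mem hu (AddSubgroup.mem_inf.mp hlam').1
    have hyt : -(y + ξ) ∈ relZ d K' L' (n + 1) := by
      rw [mem_relZ_succ']
      refine ⟨neg_mem (add_mem hy (AddSubgroup.mem_inf.mp hξ').2), ?_⟩
      have e : d n (-(y + ξ)) = lam - v := by
        rw [map_neg, map_add]
        linear_combination (norm := abel1) he - hsum
      rw [e]
      exact sub_mem (AddSubgroup.mem_inf.mp hlam').2 hv
    refine ⟨(QuotientAddGroup.mk ⟨x - ξ, hxt⟩, QuotientAddGroup.mk ⟨-(y + ξ), hyt⟩), ?_⟩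
    rw [j_apply hKKU hK'KU hLLU hL'LU (n + 1) hxt hyt]
    exact congrArg QuotientAddGroup.mk (Subtype.ext
      (show (x - ξ) - -(y + ξ) = z by linear_combination (norm := abel1) hxy))
  · rintro ⟨⟨a, b⟩, hab⟩
    revert hab
    induction a using QuotientAddGroup.induction_on with | H za => ?_
    induction b using QuotientAddGroup.induction_on with | H zb => ?_
    obtain ⟨x, hxZ⟩ := za
    obtain ⟨y, hyZ⟩ := zb
    intro hab
    rw [j_apply hKKU hK'KU hLLU hL'LU (n + 1) hxZ hyZ] at hab
    obtain ⟨hxK, hxL⟩ := mem_relZ_succ'.mp hxZ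
    obtain ⟨hyK, hyL⟩ := mem_relZ_succ'.mp hyZ
    rw [← hab, conn_mk,
      connAux_spec h n ⟨x - y, sub_mem (relZ_mono d hKKU hLLU (n + 1) hxZ)
          (relZ_mono d hK'KU hL'LU (n + 1) hyZ)⟩ hxK (neg_mem hyK) hxL (neg_mem hyL)
        (show x + -y = x - y by abel)
        (show d n x + -(d n y) = d n (x - y) by rw [map_sub]; abel),
      mk_eq_zero_iff, sub_self]
    exact zero_mem _

theorem exact_three
    (hKIK : ∀ n, KI n ≤ K n) (hKIK' : ∀ n, KI n ≤ K' n)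
    (hLIL : ∀ n, LI n ≤ L n) (hLIL' : ∀ n, LI n ≤ L' n)
    (hKKU : ∀ n, K n ≤ KU n) (hK'KU : ∀ n, K' n ≤ KU n)
    (hLLU : ∀ n, L n ≤ LU n) (hL'LU : ∀ n, L' n ≤ LU n) (n : ℕ) :
    Function.Exact (conn h n)
      ((inducedRelMap d hKIK hLIL n).prod (inducedRelMap d hKIK' hLIL' n)) := by
  intro c
  induction c using QuotientAddGroup.induction_on with | H zc => ?_
  obtain ⟨w₀, hw₀⟩ := zc
  constructor
  · intro h0
    have h1 : (QuotientAddGroup.mk ⟨w₀, relZ_mono d hKIK hLIL n hw₀⟩ :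
        relH d K L n) = 0 := congrArg Prod.fst h0
    have h2 : (QuotientAddGroup.mk ⟨w₀, relZ_mono d hKIK' hLIL' n hw₀⟩ :
        relH d K' L' n) = 0 := congrArg Prod.snd h0
    rw [mk_eq_zero_iff] at h1 h2
    obtain ⟨⟨x, hx, l, hl, he₁⟩, -⟩ := mem_relB_iff.mp h1
    obtain ⟨⟨y', hy', l', hl', he₂⟩, -⟩ := mem_relB_iff.mp h2
    have he₃ : d n x + l = d n y' + l' := he₁.symm.trans he₂
    have hzZ : x - y' ∈ relZ d KU LU (n + 1) := by
      rw [mem_relZ_succ']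
      refine ⟨sub_mem (hKKU (n + 1) hx) (hK'KU (n + 1) hy'), ?_⟩
      have e : d n (x - y') = l' - l := by
        rw [map_sub]
        linear_combination (norm := abel1) he₃
      rw [e]
      exact sub_mem (hL'LU n hl') (hLLU n hl)
    refine ⟨QuotientAddGroup.mk ⟨x - y', hzZ⟩, ?_⟩
    rw [conn_mk, connAux_spec h n ⟨x - y', hzZ⟩ hx (neg_mem hy') (neg_mem hl) hl'
      (show x + -y' = x - y' by abel)
      (show -l + l' = d n (x - y') by rw [map_sub]; linear_combination (norm := abel1) -he₃)]
    exact congrArg QuotientAddGroup.mk (Subtype.ext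
      (show d n x - -l = w₀ by rw [sub_neg_eq_add]; exact he₁.symm))
  · rintro ⟨cz, hcz⟩
    rw [← hcz]
    clear hcz
    induction cz using QuotientAddGroup.induction_on with | H zz => ?_
    obtain ⟨z, hz⟩ := zz
    obtain ⟨x, y, u, v, hx, hy, hu, hv, hxy, huv⟩ := exists_decomp h hz
    rw [conn_mk, connAux_spec h n ⟨z, hz⟩ hx hy hu hv hxy huv]
    have hm := w_mem h hx hy hu hv hxy huv
    have hsum : d n x + d n y = u + v := by rw [huv, ← hxy, map_add]
    refine Prod.ext ?_ ?_
    · show (QuotientAddGroup.mk ⟨d n x - u, relZ_mono d hKIK hLIL n hm⟩ :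
        relH d K L n) = 0
      rw [mk_eq_zero_iff, mem_relB_iff]
      exact ⟨⟨x, hx, -u, neg_mem hu, sub_eq_add_neg _ _⟩, relZ_mono d hKIK hLIL n hm⟩
    · show (QuotientAddGroup.mk ⟨d n x - u, relZ_mono d hKIK' hLIL' n hm⟩ :
        relH d K' L' n) = 0
      rw [mk_eq_zero_iff, mem_relB_iff]
      refine ⟨⟨-y, neg_mem hy, v, hv, ?_⟩, relZ_mono d hKIK' hLIL' n hm⟩
      rw [map_neg]
      linear_combination (norm := abel1) hsum

end Chase

end MVAux

section Concrete

variable (V : Type) [LinearOrder V] (G : Type) [AddCommGroup G]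

theorem bdry_single (n : ℕ) (σ : Simp V (n + 1)) (g : G) :
    bdry V G n (Finsupp.single σ g) = bdryFun V G n σ g := by
  rw [bdry, Finsupp.liftAddHom_apply, Finsupp.sum_single_index]
  · rfl
  · simp [bdryFun]

theorem support_bdry_subset (n : ℕ) (c : Ch V G (n + 1)) {τ : Simp V n}
    (hτ : τ ∈ (bdry V G n c).support) :
    ∃ σ ∈ c.support, ∃ v ∈ (σ : Simp V (n + 1)).1, τ.1 = σ.1.erase v := by
  classical
  rw [bdry, Finsupp.liftAddHom_apply] at hτ
  have h1 := Finsupp.support_sum hτ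
  obtain ⟨σ, hσ, hτ2⟩ := Finset.mem_biUnion.mp h1
  refine ⟨σ, hσ, ?_⟩
  have h2 := Finsupp.support_finset_sum (show τ ∈ _ from hτ2)
  obtain ⟨v, hv, hτ3⟩ := Finset.mem_biUnion.mp h2
  have h3 := Finsupp.support_single_subset hτ3
  rw [Finset.mem_singleton] at h3
  exact ⟨v.1, v.2, by rw [h3]⟩

end Concrete

section Hyper

variable (V : Type) [LinearOrder V] (G : Type) [AddCommGroup G]

theorem mem_chainsOn {K : Set (Finset V)} {n : ℕ} {c : Ch V G n} :
    c ∈ chainsOn V G K n ↔ ∀ σ ∈ c.support, (σ : Simp V n).1 ∈ K := Iff.rfl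

theorem chainsOn_inter (K K' : Set (Finset V)) (n : ℕ) :
    chainsOn V G (K ∩ K') n = chainsOn V G K n ⊓ chainsOn V G K' n := by
  ext c
  rw [AddSubgroup.mem_inf, mem_chainsOn, mem_chainsOn, mem_chainsOn]
  constructor
  · exact fun hc => ⟨fun σ hσ => (hc σ hσ).1, fun σ hσ => (hc σ hσ).2⟩
  · exact fun hc σ hσ => ⟨hc.1 σ hσ, hc.2 σ hσ⟩

theorem chainsOn_union (K K' : Set (Finset V)) (n : ℕ) :
    chainsOn V G (K ∪ K') n = chainsOn V G K n ⊔ chainsOn V G K' n := by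
  classical
  refine le_antisymm ?_ (sup_le (chainsOn_mono V G Set.subset_union_left n)
    (chainsOn_mono V G Set.subset_union_right n))
  intro c hc
  refine AddSubgroup.mem_sup.mpr
    ⟨c.filter (fun σ => (σ : Simp V n).1 ∈ K), ?_,
     c.filter (fun σ => ¬ (σ : Simp V n).1 ∈ K), ?_,
     Finsupp.filter_pos_add_filter_neg c _⟩
  · intro σ hσ
    rw [Finsupp.support_filter, Finset.mem_filter] at hσ
    exact hσ.2
  · intro σ hσ
    rw [Finsupp.support_filter, Finset.mem_filter] at hσ
    rcases hc σ hσ.1 with hK | hK'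
    · exact absurd hK hσ.2
    · exact hK'

theorem InfC_chainsOn_inter (K K' : Set (Finset V)) : ∀ n,
    InfC (bdry V G) (fun m => chainsOn V G (K ∩ K') m) n =
      InfC (bdry V G) (fun m => chainsOn V G K m) n ⊓
        InfC (bdry V G) (fun m => chainsOn V G K' m) n
  | 0 => chainsOn_inter V G K K' 0
  | (n + 1) => by
    show chainsOn V G (K ∩ K') (n + 1) ⊓
        (chainsOn V G (K ∩ K') n).comap (bdry V G n) = _
    rw [chainsOn_inter, chainsOn_inter, AddSubgroup.comap_inf]
    show _ = (chainsOn V G K (n + 1) ⊓ (chainsOn V G K n).comap (bdry V G n)) ⊓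
      (chainsOn V G K' (n + 1) ⊓ (chainsOn V G K' n).comap (bdry V G n))
    exact inf_inf_inf_comm _ _ _ _

/-- The key combinatorial lemma: under the intersection condition, the infimum chain
complex of a union is the sum of the infimum chain complexes. -/
theorem InfC_chainsOn_union {H H' : Set (Finset V)}
    (hHH' : ∀ σ ∈ H, ∀ σ' ∈ H', σ ∩ σ' = ∅ ∨ σ ∩ σ' ∈ H ∩ H') : ∀ n,
    InfC (bdry V G) (fun m => chainsOn V G (H ∪ H') m) n =
      InfC (bdry V G) (fun m => chainsOn V G H m) n ⊔
        InfC (bdry V G) (fun m => chainsOn V G H' m) n := by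
  classical
  have habsorb : ∀ {σ τ : Finset V}, σ ∈ H → τ ∈ H' → τ ⊆ σ → τ.Nonempty → τ ∈ H := by
    intro σ τ hσ hτ hsub hne
    rcases hHH' σ hσ τ hτ with hemp | hmem
    · rw [Finset.inter_eq_right.mpr hsub] at hemp
      exact absurd hemp (Finset.nonempty_iff_ne_empty.mp hne)
    · rw [Finset.inter_eq_right.mpr hsub] at hmem
      exact hmem.1
  have habsorb' : ∀ {σ τ : Finset V}, σ ∈ H' → τ ∈ H → τ ⊆ σ → τ.Nonempty → τ ∈ H' := by
    intro σ τ hσ hτ hsub hne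
    rcases hHH' τ hτ σ hσ with hemp | hmem
    · rw [Finset.inter_eq_left.mpr hsub] at hemp
      exact absurd hemp (Finset.nonempty_iff_ne_empty.mp hne)
    · rw [Finset.inter_eq_left.mpr hsub] at hmem
      exact hmem.2
  intro n
  refine le_antisymm ?_ (sup_le
    (InfC_mono (bdry V G) (fun m => chainsOn_mono V G Set.subset_union_left m) n)
    (InfC_mono (bdry V G) (fun m => chainsOn_mono V G Set.subset_union_right m) n))
  cases n with
  | zero => exact (chainsOn_union V G H H' 0).le
  | succ n =>
    intro c hc
    obtain ⟨hc1, hc2⟩ := AddSubgroup.mem_inf.mp hc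
    rw [AddSubgroup.mem_comap] at hc2
    set a := c.filter (fun σ => (σ : Simp V (n + 1)).1 ∈ H) with ha_def
    set b := c.filter (fun σ => ¬ (σ : Simp V (n + 1)).1 ∈ H) with hb_def
    have hab : a + b = c := Finsupp.filter_pos_add_filter_neg c _
    have haH : a ∈ chainsOn V G H (n + 1) := by
      intro σ hσ
      rw [ha_def, Finsupp.support_filter, Finset.mem_filter] at hσ
      exact hσ.2
    have hbsupp : ∀ σ ∈ b.support, (σ : Simp V (n + 1)).1 ∈ H' ∧
        (σ : Simp V (n + 1)).1 ∉ H := by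
      intro σ hσ
      rw [hb_def, Finsupp.support_filter, Finset.mem_filter] at hσ
      rcases hc1 σ hσ.1 with hK | hK'
      · exact absurd hK hσ.2
      · exact ⟨hK', hσ.2⟩
    have hbH' : b ∈ chainsOn V G H' (n + 1) := fun σ hσ => (hbsupp σ hσ).1
    -- nonemptiness of simplices
    have hsimpne : ∀ (τ : Simp V n), τ.1.Nonempty := fun τ =>
      Finset.card_pos.mp (by rw [τ.2]; omega)
    -- Claim A : the boundary of `a` is supported on `H`.
    have hdaH : bdry V G n a ∈ chainsOn V G H n := by
      intro τ hτ
      obtain ⟨σ, hσa, v, hv, hτe⟩ := support_bdry_subset V G n a hτ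
      have hσH : σ.1 ∈ H := haH σ hσa
      have hτσ : τ.1 ⊆ σ.1 := by rw [hτe]; exact Finset.erase_subset _ _
      by_contra hτH
      have hτH' : τ.1 ∉ H' := fun hmem =>
        hτH (habsorb hσH hmem hτσ (hsimpne τ))
      have hdc0 : bdry V G n c τ = 0 := by
        by_contra h0
        rcases hc2 τ (Finsupp.mem_support_iff.mpr h0) with hK | hK'
        · exact hτH hK
        · exact hτH' hK'
      have hdb : bdry V G n b τ = - bdry V G n a τ := by
        have : bdry V G n a τ + bdry V G n b τ = 0 := by
          rw [← Finsupp.add_apply, ← map_add, hab]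
          exact hdc0
        exact eq_neg_of_add_eq_zero_right this
      have hτb : τ ∈ (bdry V G n b).support := by
        rw [Finsupp.mem_support_iff, hdb]
        simpa using Finsupp.mem_support_iff.mp hτ
      obtain ⟨σ', hσ'b, v', hv', hτe'⟩ := support_bdry_subset V G n b hτb
      obtain ⟨hσ'H', hσ'H⟩ := hbsupp σ' hσ'b
      have hτσ' : τ.1 ⊆ σ'.1 := by rw [hτe']; exact Finset.erase_subset _ _
      have hτint : τ.1 ⊆ σ.1 ∩ σ'.1 := Finset.subset_inter hτσ hτσ'
      have hint : σ.1 ∩ σ'.1 ∈ H ∩ H' := by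
        rcases hHH' σ.1 hσH σ'.1 hσ'H' with hemp | hmem
        · rw [hemp] at hτint
          exact absurd (Finset.subset_empty.mp hτint)
            (Finset.nonempty_iff_ne_empty.mp (hsimpne τ))
        · exact hmem
      by_cases hcase : σ.1 ∩ σ'.1 = τ.1
      · rw [hcase] at hint
        exact hτH hint.1
      · have hss : τ.1 ⊂ σ.1 ∩ σ'.1 :=
          Finset.ssubset_iff_subset_ne.mpr ⟨hτint, fun he => hcase he.symm⟩
        have hcard : n + 2 ≤ (σ.1 ∩ σ'.1).card := by
          have := Finset.card_lt_card hss
          rw [τ.2] at this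
          omega
        have heqσ : σ.1 ∩ σ'.1 = σ.1 :=
          Finset.eq_of_subset_of_card_le Finset.inter_subset_left
            (by rw [σ.2]; omega)
        have hσσ' : σ.1 = σ'.1 :=
          Finset.eq_of_subset_of_card_le
            (by rw [← heqσ]; exact Finset.inter_subset_right)
            (by rw [σ.2, σ'.2])
        exact hσ'H (hσσ' ▸ hσH)
    -- Claim B : the boundary of `b` is supported on `H'`.
    have hdbH' : bdry V G n b ∈ chainsOn V G H' n := by
      intro τ hτ
      obtain ⟨σ', hσ'b, v', hv', hτe'⟩ := support_bdry_subset V G n b hτ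
      obtain ⟨hσ'H', hσ'H⟩ := hbsupp σ' hσ'b
      have hτσ' : τ.1 ⊆ σ'.1 := by rw [hτe']; exact Finset.erase_subset _ _
      by_contra hτH'
      have hτH : τ.1 ∉ H := fun hmem =>
        hτH' (habsorb' hσ'H' hmem hτσ' (hsimpne τ))
      have hdc0 : bdry V G n c τ = 0 := by
        by_contra h0
        rcases hc2 τ (Finsupp.mem_support_iff.mpr h0) with hK | hK'
        · exact hτH hK
        · exact hτH' hK'
      have hda : bdry V G n a τ ≠ 0 := by
        intro h0
        have : bdry V G n a τ + bdry V G n b τ = 0 := by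
          rw [← Finsupp.add_apply, ← map_add, hab]
          exact hdc0
        rw [h0, zero_add] at this
        exact Finsupp.mem_support_iff.mp hτ this
      exact hτH (hdaH τ (Finsupp.mem_support_iff.mpr hda))
    refine AddSubgroup.mem_sup.mpr ⟨a, ?_, b, ?_, hab⟩
    · exact AddSubgroup.mem_inf.mpr ⟨haH, AddSubgroup.mem_comap.mpr hdaH⟩
    · exact AddSubgroup.mem_inf.mpr ⟨hbH', AddSubgroup.mem_comap.mpr hdbH'⟩

end Hyper

section DDzero

variable (V : Type) [LinearOrder V] (G : Type) [AddCommGroup G]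

theorem sign_count {τ : Finset V} {v w : V} (hv : v ∈ τ) (hw : w ∈ τ) (hwv : w < v) :
    ((τ.erase v).filter (fun x => x < w)).card = (τ.filter (fun x => x < w)).card ∧
    ((τ.erase w).filter (fun x => x < v)).card + 1 = (τ.filter (fun x => x < v)).card := by
  constructor
  · rw [Finset.filter_erase, Finset.erase_eq_of_notMem]
    intro hmem
    exact absurd ((Finset.mem_filter.mp hmem).2.trans hwv) (lt_irrefl v)
  · have hwmem : w ∈ τ.filter (fun x => x < v) := Finset.mem_filter.mpr ⟨hw, hwv⟩
    rw [Finset.filter_erase, Finset.card_erase_of_mem hwmem]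
    have h1 : 1 ≤ (τ.filter (fun x => x < v)).card :=
      Finset.card_pos.mpr ⟨w, hwmem⟩
    omega

theorem bdry_bdry_single (n : ℕ) (τ : Simp V (n + 2)) (g : G) :
    bdry V G n (bdry V G (n + 1) (Finsupp.single τ g)) = 0 := by
  classical
  rw [bdry_single V G (n + 1) τ g]
  unfold bdryFun
  rw [map_sum]
  set F : V → V → Ch V G n := fun v w =>
    if hvw : v ∈ τ.1 ∧ w ∈ τ.1.erase v then
      Finsupp.single ⟨(τ.1.erase v).erase w, by
          rw [Finset.card_erase_of_mem hvw.2, Finset.card_erase_of_mem hvw.1, τ.2]; omega⟩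
        (((-1 : ℤ) ^ (((τ.1.erase v).filter fun x => x < w).card)) •
          (((-1 : ℤ) ^ ((τ.1.filter fun x => x < v).card)) • g))
    else 0 with hF
  have key : ∀ (v : V) (hv : v ∈ τ.1) (pf : (τ.1.erase v).card = n + 2),
      bdry V G n (Finsupp.single (⟨τ.1.erase v, pf⟩ : Simp V (n + 1))
        (((-1 : ℤ) ^ ((τ.1.filter fun w => w < v).card)) • g)) =
      ∑ w ∈ τ.1.erase v, F v w := by
    intro v hv pf
    rw [bdry_single]
    unfold bdryFun
    rw [← Finset.sum_attach (τ.1.erase v) (fun w => F v w)]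
    refine Finset.sum_congr rfl ?_
    intro w _
    simp only [hF]
    rw [dif_pos (⟨hv, w.2⟩ : v ∈ τ.1 ∧ (w : V) ∈ τ.1.erase v)]
  have step1 : ∑ v ∈ τ.1.attach,
      bdry V G n (Finsupp.single
        (⟨τ.1.erase v.1, by rw [Finset.card_erase_of_mem v.2, τ.2]; omega⟩ : Simp V (n + 1))
        (((-1 : ℤ) ^ ((τ.1.filter fun w => w < v.1).card)) • g)) =
      ∑ v ∈ τ.1.attach, (fun v' => ∑ w ∈ τ.1.erase v', F v' w) v.1 :=
    Finset.sum_congr rfl fun v _ => key v.1 v.2 _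
  rw [step1, Finset.sum_attach τ.1 (fun v' => ∑ w ∈ τ.1.erase v', F v' w),
    ← Finset.sum_sigma τ.1 (fun v => τ.1.erase v) (fun p => F p.1 p.2)]
  refine Finset.sum_involution (fun p _ => ⟨p.2, p.1⟩) ?_ ?_ ?_ ?_
  · -- pair cancellation
    intro p hp
    obtain ⟨hp1, hp2⟩ := Finset.mem_sigma.mp hp
    show F p.1 p.2 + F p.2 p.1 = 0
    set v := p.1
    set w := p.2
    have hwτ : w ∈ τ.1 := Finset.mem_of_mem_erase hp2
    have hvw : v ≠ w := (Finset.ne_of_mem_erase hp2).symm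
    have hv' : v ∈ τ.1.erase w := Finset.mem_erase.mpr ⟨hvw, hp1⟩
    simp only [hF]
    rw [dif_pos (show v ∈ τ.1 ∧ w ∈ τ.1.erase v from ⟨hp1, hp2⟩),
      dif_pos (show w ∈ τ.1 ∧ v ∈ τ.1.erase w from ⟨hwτ, hv'⟩)]
    have hsingle : ∀ (s1 s2 : Simp V n) (c1 c2 : G), s1 = s2 → c1 + c2 = 0 →
        Finsupp.single s1 c1 + Finsupp.single s2 c2 = 0 := by
      rintro s1 s2 c1 c2 rfl hc
      rw [← Finsupp.single_add, hc, Finsupp.single_zero]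
    refine hsingle _ _ _ _ (Subtype.ext Finset.erase_right_comm) ?_
    rw [smul_smul, smul_smul, ← pow_add, ← pow_add, ← add_smul]
    have hz : ((-1 : ℤ) ^ ((((τ.1.erase v).filter fun x => x < w).card) +
          ((τ.1.filter fun x => x < v).card)) +
        (-1 : ℤ) ^ ((((τ.1.erase w).filter fun x => x < v).card) +
          ((τ.1.filter fun x => x < w).card))) = 0 := by
      rcases hvw.lt_or_gt with hlt | hlt
      · -- v < w
        obtain ⟨h1, h2⟩ := sign_count V hwτ hp1 hlt
        have he : (((τ.1.erase w).filter fun x => x < v).card) +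
            ((τ.1.filter fun x => x < w).card) =
            ((((τ.1.erase v).filter fun x => x < w).card) +
              ((τ.1.filter fun x => x < v).card)) + 1 := by omega
        rw [he, pow_succ]
        ring
      · -- w < v
        obtain ⟨h1, h2⟩ := sign_count V hp1 hwτ hlt
        have he : (((τ.1.erase v).filter fun x => x < w).card) +
            ((τ.1.filter fun x => x < v).card) =
            ((((τ.1.erase w).filter fun x => x < v).card) +
              ((τ.1.filter fun x => x < w).card)) + 1 := by omega
        rw [he, pow_succ]
        ring
    rw [hz, zero_smul]
  · intro p hp _
    obtain ⟨-, hp2⟩ := Finset.mem_sigma.mp hp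
    intro heq
    exact (Finset.ne_of_mem_erase hp2) (congrArg Sigma.fst heq)
  · intro p hp
    obtain ⟨hp1, hp2⟩ := Finset.mem_sigma.mp hp
    exact Finset.mem_sigma.mpr ⟨Finset.mem_of_mem_erase hp2,
      Finset.mem_erase.mpr ⟨(Finset.ne_of_mem_erase hp2).symm, hp1⟩⟩
  · intro p hp
    rfl

theorem bdry_bdry (n : ℕ) (c : Ch V G (n + 2)) :
    bdry V G n (bdry V G (n + 1) c) = 0 := by
  have h : (bdry V G n).comp (bdry V G (n + 1)) = 0 := by
    refine Finsupp.addHom_ext fun τ g => ?_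
    simpa using bdry_bdry_single V G n τ g
  simpa using DFunLike.congr_fun h c

end DDzero

theorem InfC_closed {C : ℕ → Type} [∀ n, AddCommGroup (C n)]
    (d : ∀ n, C (n + 1) →+ C n)
    (hdd : ∀ n (x : C (n + 2)), d n (d (n + 1) x) = 0)
    (D : ∀ n, AddSubgroup (C n)) :
    ∀ n (x : C (n + 1)), x ∈ InfC d D (n + 1) → d n x ∈ InfC d D n := by
  intro n x hx
  cases n with
  | zero => exact (AddSubgroup.mem_inf.mp hx).2
  | succ m =>
    obtain ⟨h1, h2⟩ := AddSubgroup.mem_inf.mp hx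
    exact AddSubgroup.mem_inf.mpr ⟨h2,
      AddSubgroup.mem_comap.mpr (by rw [hdd]; exact zero_mem _)⟩

/-- **relative Mayer–Vietoris.**  Let `(H, A)` and `(H', A')` be hypergraph
pairs such that the intersection of a hyperedge of `H` with one of `H'` is empty or lies
in `H ∩ H'`, and likewise for `A`, `A'`.  Then there is a long exact sequence
`⋯ → H_n(H ∩ H', A ∩ A') → H_n(H,A) ⊕ H_n(H',A') → H_n(H ∪ H', A ∪ A') → ⋯`
of relative embedded homology, where the first two maps are the canonical ones and the
third is a connecting homomorphism. -/
theorem relative_mayer_vietoris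
    (V : Type) [LinearOrder V] [Fintype V] (G : Type) [AddCommGroup G]
    (H H' A A' : Set (Finset V))
    (hH : ∀ σ ∈ H ∪ H', Finset.Nonempty σ)
    (hA : A ⊆ H) (hA' : A' ⊆ H')
    (hHH' : ∀ σ ∈ H, ∀ σ' ∈ H', σ ∩ σ' = ∅ ∨ σ ∩ σ' ∈ H ∩ H')
    (hAA' : ∀ τ ∈ A, ∀ τ' ∈ A', τ ∩ τ' = ∅ ∨ τ ∩ τ' ∈ A ∩ A') :
    ∃ conn : ∀ n,
        relH (bdry V G) (InfC (bdry V G) fun m => chainsOn V G (H ∪ H') m)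
            (InfC (bdry V G) fun m => chainsOn V G (A ∪ A') m) (n + 1) →+
          relH (bdry V G) (InfC (bdry V G) fun m => chainsOn V G (H ∩ H') m)
            (InfC (bdry V G) fun m => chainsOn V G (A ∩ A') m) n,
      (∀ n, Function.Exact (mvFst V G H H' A A' n) (mvSnd V G H H' A A' n)) ∧
      (∀ n, Function.Exact (mvSnd V G H H' A A' (n + 1)) (conn n)) ∧
      (∀ n, Function.Exact (conn n) (mvFst V G H H' A A' n)) ∧
      Function.Surjective (mvSnd V G H H' A A' 0) := by
  classical
  have hdata : MVAux.MVData (bdry V G)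
      (InfC (bdry V G) fun m => chainsOn V G H m)
      (InfC (bdry V G) fun m => chainsOn V G H' m)
      (InfC (bdry V G) fun m => chainsOn V G A m)
      (InfC (bdry V G) fun m => chainsOn V G A' m)
      (InfC (bdry V G) fun m => chainsOn V G (H ∩ H') m)
      (InfC (bdry V G) fun m => chainsOn V G (H ∪ H') m)
      (InfC (bdry V G) fun m => chainsOn V G (A ∩ A') m)
      (InfC (bdry V G) fun m => chainsOn V G (A ∪ A') m) :=
    { hdd := bdry_bdry V G
      hLK := InfC_mono (bdry V G) fun m => chainsOn_mono V G hA m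
      hLK' := InfC_mono (bdry V G) fun m => chainsOn_mono V G hA' m
      hdK := InfC_closed (bdry V G) (bdry_bdry V G) _
      hdK' := InfC_closed (bdry V G) (bdry_bdry V G) _
      hdL := InfC_closed (bdry V G) (bdry_bdry V G) _
      hdL' := InfC_closed (bdry V G) (bdry_bdry V G) _
      hKI := fun n => InfC_chainsOn_inter V G H H' n
      hKU := fun n => InfC_chainsOn_union V G hHH' n
      hLI := fun n => InfC_chainsOn_inter V G A A' n
      hLU := fun n => InfC_chainsOn_union V G hAA' n }
  refine ⟨fun n => MVAux.conn hdata n, ?_, ?_, ?_, ?_⟩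
  · intro n
    exact MVAux.exact_one hdata
      (InfC_mono (bdry V G) fun m => chainsOn_mono V G Set.inter_subset_left m)
      (InfC_mono (bdry V G) fun m => chainsOn_mono V G Set.inter_subset_right m)
      (InfC_mono (bdry V G) fun m => chainsOn_mono V G Set.inter_subset_left m)
      (InfC_mono (bdry V G) fun m => chainsOn_mono V G Set.inter_subset_right m)
      (InfC_mono (bdry V G) fun m => chainsOn_mono V G Set.subset_union_left m)
      (InfC_mono (bdry V G) fun m => chainsOn_mono V G Set.subset_union_right m)
      (InfC_mono (bdry V G) fun m => chainsOn_mono V G Set.subset_union_left m)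
      (InfC_mono (bdry V G) fun m => chainsOn_mono V G Set.subset_union_right m) n
  · intro n
    exact MVAux.exact_two hdata
      (InfC_mono (bdry V G) fun m => chainsOn_mono V G Set.subset_union_left m)
      (InfC_mono (bdry V G) fun m => chainsOn_mono V G Set.subset_union_right m)
      (InfC_mono (bdry V G) fun m => chainsOn_mono V G Set.subset_union_left m)
      (InfC_mono (bdry V G) fun m => chainsOn_mono V G Set.subset_union_right m) n
  · intro n
    exact MVAux.exact_three hdata
      (InfC_mono (bdry V G) fun m => chainsOn_mono V G Set.inter_subset_left m)
      (InfC_mono (bdry V G) fun m => chainsOn_mono V G Set.inter_subset_right m)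
      (InfC_mono (bdry V G) fun m => chainsOn_mono V G Set.inter_subset_left m)
      (InfC_mono (bdry V G) fun m => chainsOn_mono V G Set.inter_subset_right m)
      (InfC_mono (bdry V G) fun m => chainsOn_mono V G Set.subset_union_left m)
      (InfC_mono (bdry V G) fun m => chainsOn_mono V G Set.subset_union_right m)
      (InfC_mono (bdry V G) fun m => chainsOn_mono V G Set.subset_union_left m)
      (InfC_mono (bdry V G) fun m => chainsOn_mono V G Set.subset_union_right m) n
  · exact MVAux.surj_zero hdata
      (InfC_mono (bdry V G) fun m => chainsOn_mono V G Set.subset_union_left m)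
      (InfC_mono (bdry V G) fun m => chainsOn_mono V G Set.subset_union_right m)
      (InfC_mono (bdry V G) fun m => chainsOn_mono V G Set.subset_union_left m)
      (InfC_mono (bdry V G) fun m => chainsOn_mono V G Set.subset_union_right m)
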